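/- Assume the Notation 3.2 setup. Let n ≥ 1 be a natural number with binary expansion n = 2^{i_1} + ⋯ + 2^{i_d} where i_1 < i_2 < ⋯ < i_d, and let m be such that 2^m ≤ n < 2^{m+1}. Define R(n) = {a ∈ A(n) : A(2^{m+1}−n)·a ⊆ U(2^{m+1})}. Then V(2^{i_1})V(2^{i_2})⋯V(2^{i_d}) + R(n) = A(n). -/

import Mathlib

open Module

noncomputable section

/-- The free associative algebra `K⟨x,y⟩` on two generators. -/
abbrev FA (K : Type*) [Field K] := FreeAlgebra K (Fin 2)

/-- The element of `K⟨x,y⟩` given by a word (a list of letters). -/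
def wordOf (K : Type*) [Field K] (l : List (Fin 2)) : FA K :=
  (l.map (FreeAlgebra.ι K)).prod

/-- `a` is a word of length `n` over the two generators. -/
def IsWord (K : Type*) [Field K] (n : ℕ) (a : FA K) : Prop :=
  ∃ l : List (Fin 2), l.length = n ∧ a = wordOf K l

/-- `A(n)`: the span of all words of length `n`. -/
def Aspan (K : Type*) [Field K] (n : ℕ) : Submodule K (FA K) :=
  Submodule.span K {a | IsWord K n a}

/-- The set `T = ∪_{i ≥ 1} {f(i)-g(i)-1, …, f(i)-1}`. -/
def Tset (f g : ℕ → ℕ) : Set ℕ :=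
  {n | ∃ i, 1 ≤ i ∧ f i ≤ n + g i + 1 ∧ n + 1 ≤ f i}

/-- The data and conditions of Notation 3.2 (with the subspaces `U(2^n)`, `V(2^n)`
satisfying conditions (1)–(8) of Proposition 3.1). Here `U n` and `V n` denote the
subspaces `U(2^n)` and `V(2^n)` of `A(2^n)`. -/
structure LSYSetup (K : Type*) [Field K] where
  f : ℕ → ℕ
  g : ℕ → ℕ
  W : ℕ → Submodule K (FA K)
  U : ℕ → Submodule K (FA K)
  V : ℕ → Submodule K (FA K)
  /-- `f(i-1) < f(i) - g(i) - 1` for all `i ≥ 1` -/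
  hf : ∀ i, 1 ≤ i → f (i - 1) + g i + 1 < f i
  /-- `W_i ⊆ A(2^{f(i)})` -/
  hW_le : ∀ i, 1 ≤ i → W i ≤ Aspan K (2 ^ f i)
  /-- `dim W_i ≤ 2^{2^{g(i)}} - 2` -/
  hW_dim : ∀ i, 1 ≤ i → finrank K (W i) ≤ 2 ^ 2 ^ g i - 2
  hU_le : ∀ n, U n ≤ Aspan K (2 ^ n)
  hV_le : ∀ n, V n ≤ Aspan K (2 ^ n)
  /-- (1) `U(2^n) ⊕ V(2^n) = A(2^n)` -/
  h_disj : ∀ n, Disjoint (U n) (V n)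
  h_sup : ∀ n, U n ⊔ V n = Aspan K (2 ^ n)
  /-- (2) `dim V(2^n) = 2` whenever `n ∉ T` -/
  h_dimV : ∀ n, n ∉ Tset f g → finrank K (V n) = 2
  /-- (3) `dim V(2^{n+j}) = 2^{2^j}` whenever `n = f(i)-g(i)-1` and `0 ≤ j ≤ g(i)` -/
  h_dimV' : ∀ i j n, 1 ≤ i → n + g i + 1 = f i → j ≤ g i →
      finrank K (V (n + j)) = 2 ^ 2 ^ j
  /-- (4) `V(2^n)` has a basis consisting of words -/
  h_basis : ∀ n, ∃ s : Set (FA K), (∀ w ∈ s, IsWord K (2 ^ n) w) ∧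
      LinearIndependent K ((↑) : s → FA K) ∧ Submodule.span K s = V n
  /-- (5) `W_i ⊆ U(2^{f(i)})` -/
  hWU : ∀ i, 1 ≤ i → W i ≤ U (f i)
  /-- (6) `A(2^n)U(2^n) + U(2^n)A(2^n) ⊆ U(2^{n+1})` -/
  hU_mul : ∀ n, Aspan K (2 ^ n) * U n ⊔ U n * Aspan K (2 ^ n) ≤ U (n + 1)
  /-- (7) `V(2^{n+1}) ⊆ V(2^n)V(2^n)` -/
  hV_mul : ∀ n, V (n + 1) ≤ V n * V n
  /-- (8) if `n ∉ T` then some word `w ∈ V(2^n)` has `w·A(2^n) ⊆ U(2^{n+1})` -/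
  h_word : ∀ n, n ∉ Tset f g → ∃ w, IsWord K (2 ^ n) w ∧ w ∈ V n ∧
      ∀ a ∈ Aspan K (2 ^ n), w * a ∈ U (n + 1)

variable {K : Type*} [Field K]

/-- `R(n) = {a ∈ A(n) : A(2^{m+1}-n)·a ⊆ U(2^{m+1})}`. -/
def Rspace (S : LSYSetup K) (n m : ℕ) : Submodule K (FA K) where
  carrier := {a | a ∈ Aspan K n ∧ ∀ b ∈ Aspan K (2 ^ (m + 1) - n), b * a ∈ S.U (m + 1)}
  add_mem' := by
    rintro a b ⟨ha1, ha2⟩ ⟨hb1, hb2⟩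
    exact ⟨add_mem ha1 hb1, fun c hc => by
      rw [mul_add]; exact add_mem (ha2 c hc) (hb2 c hc)⟩
  zero_mem' := ⟨zero_mem _, fun c hc => by rw [mul_zero]; exact zero_mem _⟩
  smul_mem' := by
    rintro k a ⟨ha1, ha2⟩
    exact ⟨Submodule.smul_mem _ k ha1, fun c hc => by
      rw [mul_smul_comm]; exact Submodule.smul_mem _ _ (ha2 c hc)⟩

/-- `L(n) = {a ∈ A(n) : a·A(2^{m+1}-n) ⊆ U(2^{m+1})}`. -/
def Lspace (S : LSYSetup K) (n m : ℕ) : Submodule K (FA K) where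
  carrier := {a | a ∈ Aspan K n ∧ ∀ b ∈ Aspan K (2 ^ (m + 1) - n), a * b ∈ S.U (m + 1)}
  add_mem' := by
    rintro a b ⟨ha1, ha2⟩ ⟨hb1, hb2⟩
    exact ⟨add_mem ha1 hb1, fun c hc => by
      rw [add_mul]; exact add_mem (ha2 c hc) (hb2 c hc)⟩
  zero_mem' := ⟨zero_mem _, fun c hc => by rw [zero_mul]; exact zero_mem _⟩
  smul_mem' := by
    rintro k a ⟨ha1, ha2⟩
    exact ⟨Submodule.smul_mem _ k ha1, fun c hc => by
      rw [smul_mul_assoc]; exact Submodule.smul_mem _ _ (ha2 c hc)⟩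

/-- `I(n) = {a ∈ A(n) : A(j)·a·A(2^{m+2}-j-n) ⊆ U(2^{m+1})A(2^{m+1}) + A(2^{m+1})U(2^{m+1})`
for all `0 ≤ j ≤ 2^{m+2}-n}`, where `2^m ≤ n < 2^{m+1}` (i.e. `m = Nat.log 2 n`). -/
def Ispace (S : LSYSetup K) (n : ℕ) : Submodule K (FA K) where
  carrier := {a | a ∈ Aspan K n ∧ ∀ j ≤ 2 ^ (Nat.log 2 n + 2) - n,
      ∀ b ∈ Aspan K j, ∀ c ∈ Aspan K (2 ^ (Nat.log 2 n + 2) - j - n),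
      b * a * c ∈ S.U (Nat.log 2 n + 1) * Aspan K (2 ^ (Nat.log 2 n + 1)) ⊔
        Aspan K (2 ^ (Nat.log 2 n + 1)) * S.U (Nat.log 2 n + 1)}
  add_mem' := by
    rintro a b ⟨ha1, ha2⟩ ⟨hb1, hb2⟩
    refine ⟨add_mem ha1 hb1, fun j hj c hc d hd => ?_⟩
    rw [mul_add, add_mul]
    exact add_mem (ha2 j hj c hc d hd) (hb2 j hj c hc d hd)
  zero_mem' := ⟨zero_mem _, fun j hj c hc d hd => by
    rw [mul_zero, zero_mul]; exact zero_mem _⟩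
  smul_mem' := by
    rintro k a ⟨ha1, ha2⟩
    refine ⟨Submodule.smul_mem _ k ha1, fun j hj c hc d hd => ?_⟩
    rw [mul_smul_comm, smul_mul_assoc]
    exact Submodule.smul_mem _ _ (ha2 j hj c hc d hd)


/-! ### Auxiliary lemmas -/

lemma wordOf_append (l l' : List (Fin 2)) :
    wordOf K (l ++ l') = wordOf K l * wordOf K l' := by
  simp [wordOf]

open scoped Pointwise in
lemma wordSet_mul (p q : ℕ) :
    {a : FA K | IsWord K p a} * {a | IsWord K q a} = {a | IsWord K (p + q) a} := by
  ext c
  constructor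
  · rintro ⟨a, ha, b, hb, rfl⟩
    obtain ⟨l1, hl1, rfl⟩ := ha
    obtain ⟨l2, hl2, rfl⟩ := hb
    exact ⟨l1 ++ l2, by simp [hl1, hl2], (wordOf_append l1 l2).symm⟩
  · rintro ⟨l, hl, rfl⟩
    refine ⟨wordOf K (l.take p), ⟨l.take p, by simp [hl], rfl⟩,
            wordOf K (l.drop p), ⟨l.drop p, by simp [hl], rfl⟩, ?_⟩
    show wordOf K (l.take p) * wordOf K (l.drop p) = wordOf K l
    rw [← wordOf_append, List.take_append_drop]

lemma Aspan_mul (p q : ℕ) : Aspan K p * Aspan K q = Aspan K (p + q) := by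
  rw [Aspan, Aspan, Submodule.span_mul_span, wordSet_mul, Aspan]

lemma Aspan_zero : Aspan K 0 = 1 := by
  rw [Aspan, Submodule.one_eq_span]
  congr 1
  ext a
  simp only [Set.mem_setOf_eq, IsWord, Set.mem_singleton_iff]
  constructor
  · rintro ⟨l, hl, rfl⟩
    rw [List.length_eq_zero_iff.mp hl]
    simp [wordOf]
  · rintro rfl
    exact ⟨[], rfl, by simp [wordOf]⟩

lemma prodV_le (S : LSYSetup K) (L : List ℕ) :
    (L.map S.V).prod ≤ Aspan K ((L.map (2 ^ ·)).sum) := by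
  induction L with
  | nil => simp [Aspan_zero]
  | cons i L ih =>
    simp only [List.map_cons, List.prod_cons, List.sum_cons]
    rw [← Aspan_mul]
    exact mul_le_mul' (S.hV_le i) ih

/-- Key alignment lemma: if `p` is divisible by `2^k` and `p + 2^k + q = 2^{k+d}`,
then `A(p)·U(2^k)·A(q) ⊆ U(2^{k+d})`, by repeated use of condition (6). -/
lemma aligned (S : LSYSetup K) (d : ℕ) : ∀ k p q, p + 2 ^ k + q = 2 ^ (k + d) →
    2 ^ k ∣ p → Aspan K p * S.U k * Aspan K q ≤ S.U (k + d) := by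
  induction d with
  | zero =>
    intro k p q hsum _
    have hp : p = 0 ∧ q = 0 := by
      rw [Nat.add_zero] at hsum
      generalize 2 ^ k = a at hsum
      omega
    rw [hp.1, hp.2, Aspan_zero, one_mul, mul_one, Nat.add_zero]
  | succ d ih =>
    intro k p q hsum hdvd
    obtain ⟨t, ht⟩ := hdvd
    have hk1 : (2:ℕ) ^ (k+1) = 2 * 2 ^ k := by rw [pow_succ]; ring
    have hexp : k + (d+1) = (k+1) + d := by omega
    rw [hexp] at hsum ⊢
    have hUk1 : Aspan K (2 ^ k) * S.U k ≤ S.U (k+1) := le_sup_left.trans (S.hU_mul k)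
    have hUk1' : S.U k * Aspan K (2 ^ k) ≤ S.U (k+1) := le_sup_right.trans (S.hU_mul k)
    rcases Nat.even_or_odd t with ⟨s, hs⟩ | ⟨s, hs⟩
    · -- `2^{k+1} ∣ p`; then `q = 2^k + q'` with `2^{k+1} ∣ q'`
      have hp1 : 2 ^ (k+1) ∣ p := ⟨s, by rw [ht, hs, hk1]; ring⟩
      have htot : (2:ℕ) ^ (k+1) ∣ 2 ^ ((k+1)+d) := pow_dvd_pow 2 (by omega)
      have hqd : 2 ^ (k+1) ∣ (2 ^ k + q) := by
        have h1 : 2 ^ k + q = 2 ^ ((k+1)+d) - p := by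
          generalize 2 ^ ((k+1)+d) = P at hsum ⊢
          generalize 2 ^ k = a at hsum ⊢
          omega
        rw [h1]
        exact Nat.dvd_sub htot hp1
      have hqge : 2 ^ k ≤ q := by
        have := Nat.le_of_dvd (by positivity) hqd
        generalize hA : 2 ^ k = a at this hk1 ⊢
        omega
      set q' := q - 2 ^ k with hq'
      have hq : q = 2 ^ k + q' := by omega
      have hq'd : 2 ^ (k+1) ∣ q' := by
        have h1 : q' = (2 ^ k + q) - 2 ^ (k+1) := by
          generalize 2 ^ k = a at hq' hqge hk1 ⊢
          omega
        rw [h1]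
        exact Nat.dvd_sub hqd dvd_rfl
      have hsum' : p + 2 ^ (k+1) + q' = 2 ^ ((k+1) + d) := by
        generalize 2 ^ ((k+1)+d) = P at hsum ⊢
        generalize 2 ^ k = a at hsum hq hk1 ⊢
        generalize 2 ^ (k+1) = b at hk1 ⊢
        omega
      calc Aspan K p * S.U k * Aspan K q
          = Aspan K p * (S.U k * Aspan K (2 ^ k)) * Aspan K q' := by
            rw [hq, ← Aspan_mul, ← mul_assoc, mul_assoc (Aspan K p)]
        _ ≤ Aspan K p * S.U (k+1) * Aspan K q' :=
            mul_le_mul' (mul_le_mul' le_rfl hUk1') le_rfl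
        _ ≤ S.U ((k+1) + d) := ih (k+1) p q' hsum' hp1
    · -- `p = 2^k + p'` with `2^{k+1} ∣ p'`
      set p' := 2 ^ (k+1) * s with hp'
      have hp : p = p' + 2 ^ k := by rw [ht, hs, hp', hk1]; ring
      have hp'd : 2 ^ (k+1) ∣ p' := ⟨s, rfl⟩
      have hsum' : p' + 2 ^ (k+1) + q = 2 ^ ((k+1) + d) := by
        generalize 2 ^ ((k+1)+d) = P at hsum ⊢
        generalize 2 ^ k = a at hsum hp hk1 ⊢
        generalize 2 ^ (k+1) = b at hk1 hp ⊢
        omega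
      calc Aspan K p * S.U k * Aspan K q
          = Aspan K p' * (Aspan K (2 ^ k) * S.U k) * Aspan K q := by
            rw [hp, ← Aspan_mul, mul_assoc (Aspan K p')]
        _ ≤ Aspan K p' * S.U (k+1) * Aspan K q :=
            mul_le_mul' (mul_le_mul' le_rfl hUk1) le_rfl
        _ ≤ S.U ((k+1) + d) := ih (k+1) p' q hsum' hp'd

/-- Sum of distinct powers of two, all exponents `< b`, is `< 2^b`. -/
lemma binsum_lt : ∀ L : List ℕ, L.Pairwise (· < ·) → ∀ b, (∀ j ∈ L, j < b) →
    ((L.map (2 ^ ·)).sum) < 2 ^ b := by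
  intro L
  induction L using List.reverseRecOn with
  | nil => intro _ b _; positivity
  | append_singleton L a ih =>
    intro hsort b hb
    have hsp := List.pairwise_append.mp hsort
    have hLa : ∀ j ∈ L, j < a := fun j hj => hsp.2.2 j hj a (List.mem_singleton_self a)
    have h1 : ((L.map (2 ^ ·)).sum) < 2 ^ a := ih hsp.1 a hLa
    have h2 : a < b := hb a (by simp)
    have h3 : 2 ^ (a+1) ≤ 2 ^ b := Nat.pow_le_pow_right (by norm_num) (by omega)
    have h4 : (2:ℕ) ^ (a+1) = 2 * 2 ^ a := by rw [pow_succ]; ring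
    simp only [List.map_append, List.sum_append, List.map_cons, List.map_nil,
      List.sum_cons, List.sum_nil]
    generalize 2 ^ a = x at h1 h4
    generalize 2 ^ b = y at h3 ⊢
    generalize 2 ^ (a+1) = z at h3 h4
    omega

/-- Membership criterion for `Rspace`. -/
lemma mem_Rspace (S : LSYSetup K) {n m : ℕ} {a : FA K} (h1 : a ∈ Aspan K n)
    (h2 : ∀ b ∈ Aspan K (2 ^ (m + 1) - n), b * a ∈ S.U (m + 1)) :
    a ∈ Rspace S n m := ⟨h1, h2⟩

lemma Rspace_le (S : LSYSetup K) (n m : ℕ) : Rspace S n m ≤ Aspan K n :=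
  fun _ ha => ha.1

lemma main_aux (S : LSYSetup K) :
    ∀ (L : List ℕ) (n m : ℕ), L ≠ [] → L.Pairwise (· < ·) → (L.map (2 ^ ·)).sum = n →
    2 ^ m ≤ n → n < 2 ^ (m + 1) →
    (L.map S.V).prod ⊔ Rspace S n m = Aspan K n := by
  intro L
  induction L with
  | nil => intro n m hne; exact absurd rfl hne
  | cons i L' ih =>
    intro n m _ hsort hsum hm1 hm2
    have hsc := List.pairwise_cons.mp hsort
    have hilt : ∀ j ∈ L', i < j := hsc.1
    have h2m1 : (2:ℕ) ^ (m+1) = 2 * 2 ^ m := by rw [pow_succ]; ring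
    by_cases hL' : L' = []
    · -- base case: `n = 2^i` and `m = i`
      subst hL'
      have hn2 : n = 2 ^ i := by simpa using hsum.symm
      subst hn2
      have him : i = m := by
        have h1 : m ≤ i := (Nat.pow_le_pow_iff_right (by norm_num)).mp hm1
        have h2 : i < m + 1 := (Nat.pow_lt_pow_iff_right (by norm_num)).mp hm2
        omega
      subst him
      simp only [List.map_cons, List.map_nil, List.prod_cons, List.prod_nil, mul_one]
      apply le_antisymm
      · exact sup_le (S.hV_le i) (Rspace_le S _ i)
      · rw [← S.h_sup i, sup_comm (S.U i)]
        refine sup_le le_sup_left (le_trans ?_ le_sup_right)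
        intro u hu
        refine mem_Rspace S (S.hU_le i hu) (fun b hb => ?_)
        have hsub : 2 ^ (i+1) - 2 ^ i = 2 ^ i := by
          generalize 2 ^ (i+1) = P at h2m1 ⊢
          generalize 2 ^ i = a at h2m1 ⊢
          omega
        rw [hsub] at hb
        exact le_sup_left.trans (S.hU_mul i) (Submodule.mul_mem_mul hb hu)
    · -- inductive step
      set n' := (L'.map (2 ^ ·)).sum with hn'
      have hsum' : n = 2 ^ i + n' := by
        rw [← hsum]; simp [hn']
      -- `2^m ≤ n'`
      have hmem_le : ∀ j ∈ L', 2 ^ j ≤ n' := by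
        intro j hj
        exact List.le_sum_of_mem (List.mem_map_of_mem (f := (2 ^ ·)) hj)
      have hm1' : 2 ^ m ≤ n' := by
        by_contra hcon
        push_neg at hcon
        have hall : ∀ j ∈ i :: L', j < m := by
          intro j hj
          rcases List.mem_cons.mp hj with rfl | hj'
          · obtain ⟨j', hj'⟩ := List.exists_mem_of_ne_nil L' hL'
            have h1 : 2 ^ j' ≤ n' := hmem_le j' hj'
            have h2 : j' < m := (Nat.pow_lt_pow_iff_right (by norm_num)).mp
              (lt_of_le_of_lt h1 hcon)
            have := hilt j' hj'
            omega
          · exact (Nat.pow_lt_pow_iff_right (by norm_num)).mp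
              (lt_of_le_of_lt (hmem_le j hj') hcon)
        have := binsum_lt (i :: L') hsort m hall
        omega
      have hm2' : n' < 2 ^ (m+1) := by
        have h0 : 0 < 2 ^ i := by positivity
        omega
      have ihq := ih n' m hL' hsc.2 rfl hm1' hm2'
      -- divisibility facts
      have hdvdn' : 2 ^ (i+1) ∣ n' := by
        apply List.dvd_sum
        intro x hx
        obtain ⟨j, hj, rfl⟩ := List.mem_map.mp hx
        exact pow_dvd_pow 2 (hilt j hj)
      have him : i < m + 1 := by
        apply (Nat.pow_lt_pow_iff_right (by norm_num : (1:ℕ) < 2)).mp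
        have h0 : 0 < n' := lt_of_lt_of_le (by positivity) hm1'
        omega
      have hdvdp : 2 ^ i ∣ 2 ^ (m+1) - n := by
        apply Nat.dvd_sub (pow_dvd_pow 2 (by omega))
        rw [hsum']
        exact Nat.dvd_add dvd_rfl (dvd_trans (pow_dvd_pow 2 (by omega)) hdvdn')
      have halignsum : (2 ^ (m+1) - n) + 2 ^ i + n' = 2 ^ (i + (m + 1 - i)) := by
        have he : i + (m + 1 - i) = m + 1 := by omega
        rw [he]
        generalize 2 ^ (m+1) = P at hm2 ⊢
        generalize 2 ^ i = a at hsum' ⊢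
        omega
      have halign : Aspan K (2 ^ (m+1) - n) * S.U i * Aspan K n' ≤ S.U (m+1) := by
        have := aligned S (m + 1 - i) i (2 ^ (m+1) - n) n' halignsum hdvdp
        rwa [show i + (m + 1 - i) = m + 1 by omega] at this
      -- key decomposition
      have key : Aspan K n = Aspan K (2 ^ i) * ((L'.map S.V).prod ⊔ Rspace S n' m) := by
        rw [ihq, Aspan_mul, ← hsum']
      simp only [List.map_cons, List.prod_cons]
      apply le_antisymm
      · refine sup_le ?_ (Rspace_le S n m)
        calc S.V i * (L'.map S.V).prod ≤ Aspan K (2 ^ i) * Aspan K n' :=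
              mul_le_mul' (S.hV_le i) (prodV_le S L')
          _ = Aspan K n := by rw [Aspan_mul, ← hsum']
      · rw [key, Submodule.mul_sup]
        apply sup_le
        · -- `A(2^i)·∏V ≤ V(2^i)·∏V ⊔ R(n)`
          rw [← S.h_sup i, Submodule.sup_mul]
          refine sup_le (le_trans ?_ le_sup_right) le_sup_left
          -- `U(2^i)·∏V ≤ R(n)`
          refine le_trans (mul_le_mul' le_rfl (prodV_le S L')) ?_
          rw [Submodule.mul_le]
          intro u hu c hc
          refine mem_Rspace S ?_ (fun b hb => ?_)
          · have : u * c ∈ Aspan K (2 ^ i) * Aspan K n' :=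
              Submodule.mul_mem_mul (S.hU_le i hu) hc
            rwa [Aspan_mul, ← hsum'] at this
          · have hmem : b * u * c ∈ Aspan K (2 ^ (m+1) - n) * S.U i * Aspan K n' :=
              Submodule.mul_mem_mul (Submodule.mul_mem_mul hb hu) hc
            have := halign hmem
            rwa [mul_assoc] at this
        · -- `A(2^i)·R(n') ≤ R(n)`
          refine le_trans ?_ le_sup_right
          rw [Submodule.mul_le]
          intro a ha r hr
          refine mem_Rspace S ?_ (fun b hb => ?_)
          · have : a * r ∈ Aspan K (2 ^ i) * Aspan K n' :=
              Submodule.mul_mem_mul ha hr.1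
            rwa [Aspan_mul, ← hsum'] at this
          · have hba : b * a ∈ Aspan K (2 ^ (m+1) - n') := by
              have : b * a ∈ Aspan K (2 ^ (m+1) - n) * Aspan K (2 ^ i) :=
                Submodule.mul_mem_mul hb ha
              rw [Aspan_mul] at this
              rwa [show 2 ^ (m+1) - n + 2 ^ i = 2 ^ (m+1) - n' by
                generalize 2 ^ (m+1) = P at hm2 ⊢
                generalize 2 ^ i = a at hsum' ⊢
                omega] at this
            have := hr.2 (b * a) hba
            rwa [mul_assoc] at this

/-- **Lemma 3.3 (first part).** If `n ≥ 1` has binary expansion `2^{i₁} + ⋯ + 2^{i_d}`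
with `i₁ < ⋯ < i_d` and `2^m ≤ n < 2^{m+1}`, then
`V(2^{i₁})V(2^{i₂})⋯V(2^{i_d}) + R(n) = A(n)`. -/
theorem lemma_3_3_R (S : LSYSetup K) (n : ℕ) (hn : 1 ≤ n)
    (L : List ℕ) (hL : L.Pairwise (· < ·)) (hsum : (L.map (2 ^ ·)).sum = n)
    (m : ℕ) (hm₁ : 2 ^ m ≤ n) (hm₂ : n < 2 ^ (m + 1)) :
    (L.map S.V).prod ⊔ Rspace S n m = Aspan K n := by
  have hne : L ≠ [] := by
    rintro rfl
    simp at hsum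
    omega
  exact main_aux S L n m hne hL hsum hm₁ hm₂

end
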